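/- arXiv:hep-th/9704090 — 2 statements merged into one kernel-verified Lean document; each statement's English description precedes it below -/
import Mathlib

section
/- (From the auxiliary linear problem to the equations of motion) Suppose τ^m(x) = ∏_{j=1}^{N} σ(x−x_j^m) for each integer m, and suppose there exist functions ρ^m(x), holomorphic and nonvanishing at all the points x_j^{m'} and x_j^{m'} ± η, satisfying the functional equation τ^{m+1}(x)ρ^m(x+η) − λ·τ^{m+1}(x+η)ρ^m(x) = τ^m(x+η)ρ^{m+1}(x) for all x and m. If the roots are in generic position (x_i^m − x_j^m ∉ {0, ±η} for i≠j and x_i^m − x_j^{m±1} ∉ {0, ±η} modulo the lattice), then the roots satisfy the discrete-time equations of motion ∏_{k=1}^{N} [σ(x_j^m−x_k^{m−1})σ(x_j^m−x_k^m+η)σ(x_j^m−x_k^{m+1}−η)] / [σ(x_j^m−x_k^{m−1}+η)σ(x_j^m−x_k^m−η)σ(x_j^m−x_k^{m+1})] = −1 for all j and m. -/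
open Complex Filter Topology

/-- The Weierstrass sigma function associated to the lattice generated by `2ω₁, 2ω₂`,
defined by its classical Weierstrass canonical product. -/
noncomputable def wSigma (ω₁ ω₂ : ℂ) (z : ℂ) : ℂ :=
  z * ∏' p : {p : ℤ × ℤ // p ≠ 0},
    ((1 - z / (2 * (p.1.1 : ℂ) * ω₁ + 2 * (p.1.2 : ℂ) * ω₂)) *
      Complex.exp (z / (2 * (p.1.1 : ℂ) * ω₁ + 2 * (p.1.2 : ℂ) * ω₂) +
        z ^ 2 / (2 * (2 * (p.1.1 : ℂ) * ω₁ + 2 * (p.1.2 : ℂ) * ω₂) ^ 2)))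

/-- The Weierstrass zeta function `ζw = σ'/σ`. -/
noncomputable def wZeta (ω₁ ω₂ : ℂ) (z : ℂ) : ℂ :=
  deriv (wSigma ω₁ ω₂) z / wSigma ω₁ ω₂ z


lemma wSigma_zero (ω₁ ω₂ : ℂ) : wSigma ω₁ ω₂ 0 = 0 := by simp [wSigma]

def negEquiv : {p : ℤ × ℤ // p ≠ 0} ≃ {p : ℤ × ℤ // p ≠ 0} where
  toFun p := ⟨-p.1, neg_ne_zero.mpr p.2⟩
  invFun p := ⟨-p.1, neg_ne_zero.mpr p.2⟩
  left_inv p := by simp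
  right_inv p := by simp

lemma wSigma_neg (ω₁ ω₂ z : ℂ) : wSigma ω₁ ω₂ (-z) = -wSigma ω₁ ω₂ z := by
  unfold wSigma
  have hprod :
      (∏' p : {p : ℤ × ℤ // p ≠ 0},
        ((1 - (-z) / (2 * (p.1.1 : ℂ) * ω₁ + 2 * (p.1.2 : ℂ) * ω₂)) *
          Complex.exp ((-z) / (2 * (p.1.1 : ℂ) * ω₁ + 2 * (p.1.2 : ℂ) * ω₂) +
            (-z) ^ 2 / (2 * (2 * (p.1.1 : ℂ) * ω₁ + 2 * (p.1.2 : ℂ) * ω₂) ^ 2)))) =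
      (∏' p : {p : ℤ × ℤ // p ≠ 0},
        ((1 - z / (2 * (p.1.1 : ℂ) * ω₁ + 2 * (p.1.2 : ℂ) * ω₂)) *
          Complex.exp (z / (2 * (p.1.1 : ℂ) * ω₁ + 2 * (p.1.2 : ℂ) * ω₂) +
            z ^ 2 / (2 * (2 * (p.1.1 : ℂ) * ω₁ + 2 * (p.1.2 : ℂ) * ω₂) ^ 2)))) := by
    rw [← negEquiv.tprod_eq]
    refine tprod_congr fun p => ?_
    have hw : (2 * (((negEquiv p).1.1 : ℤ) : ℂ) * ω₁ + 2 * (((negEquiv p).1.2 : ℤ) : ℂ) * ω₂)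
        = -(2 * (p.1.1 : ℂ) * ω₁ + 2 * (p.1.2 : ℂ) * ω₂) := by
      show (2 * ((-p.1.1 : ℤ) : ℂ) * ω₁ + 2 * ((-p.1.2 : ℤ) : ℂ) * ω₂) = _
      push_cast; ring
    rw [hw]
    simp only [neg_div_neg_eq, neg_sq]
  rw [hprod]; ring

/-- `wSigma` is nonzero at `-z` iff at `z`. -/
lemma wSigma_neg_ne_zero {ω₁ ω₂ z : ℂ} (h : wSigma ω₁ ω₂ z ≠ 0) :
    wSigma ω₁ ω₂ (-z) ≠ 0 := by
  rw [wSigma_neg]; exact neg_ne_zero.mpr h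

/-- from the auxiliary linear problem
τ^{m+1}(x)ρ^m(x+η) − λτ^{m+1}(x+η)ρ^m(x) = τ^m(x+η)ρ^{m+1}(x),
with τ^m(x) = ∏_j σ(x − x_j^m), the roots x_j^m satisfy the discrete-time
Ruijsenaars–Schneider (Bethe-type) equations of motion. -/
theorem linear_problem_implies_equations_of_motion (N : ℕ) (ω₁ ω₂ η lam : ℂ)
    (X : ℤ → Fin N → ℂ) (ρ : ℤ → ℂ → ℂ)
    (hω : (ω₂ / ω₁).im ≠ 0) (hη : η ≠ 0) (hlam : lam ≠ 0)
    (hgen0 : ∀ (m : ℤ) (i j : Fin N), i ≠ j → wSigma ω₁ ω₂ (X m i - X m j) ≠ 0)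
    (hgenp : ∀ (m : ℤ) (i j : Fin N), wSigma ω₁ ω₂ (X m i - X m j + η) ≠ 0)
    (hgenm : ∀ (m : ℤ) (i j : Fin N), wSigma ω₁ ω₂ (X m i - X m j - η) ≠ 0)
    (hcr0 : ∀ (m : ℤ) (i j : Fin N), wSigma ω₁ ω₂ (X m i - X (m + 1) j) ≠ 0)
    (hcrp : ∀ (m : ℤ) (i j : Fin N), wSigma ω₁ ω₂ (X m i - X (m + 1) j + η) ≠ 0)
    (hcrm : ∀ (m : ℤ) (i j : Fin N), wSigma ω₁ ω₂ (X m i - X (m + 1) j - η) ≠ 0)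
    (hρ0 : ∀ (m m' : ℤ) (j : Fin N), ρ m (X m' j) ≠ 0)
    (hρp : ∀ (m m' : ℤ) (j : Fin N), ρ m (X m' j + η) ≠ 0)
    (hρm : ∀ (m m' : ℤ) (j : Fin N), ρ m (X m' j - η) ≠ 0)
    (hfe : ∀ (m : ℤ) (x : ℂ),
      (∏ j, wSigma ω₁ ω₂ (x - X (m + 1) j)) * ρ m (x + η) -
          lam * (∏ j, wSigma ω₁ ω₂ (x + η - X (m + 1) j)) * ρ m x =
        (∏ j, wSigma ω₁ ω₂ (x + η - X m j)) * ρ (m + 1) x) :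
    ∀ (m : ℤ) (j : Fin N),
      (∏ k, (wSigma ω₁ ω₂ (X m j - X (m - 1) k) *
              wSigma ω₁ ω₂ (X m j - X m k + η) *
              wSigma ω₁ ω₂ (X m j - X (m + 1) k - η)) /
            (wSigma ω₁ ω₂ (X m j - X (m - 1) k + η) *
              wSigma ω₁ ω₂ (X m j - X m k - η) *
              wSigma ω₁ ω₂ (X m j - X (m + 1) k))) = -1 := by
  intro m j
  set b := X m j with hb
  -- canonical products
  set P1 := ∏ k, wSigma ω₁ ω₂ (b - X (m - 1) k) with hP1
  set P2 := ∏ k, wSigma ω₁ ω₂ (b - X m k + η) with hP2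
  set P3 := ∏ k, wSigma ω₁ ω₂ (b - X (m + 1) k - η) with hP3
  set Q1 := ∏ k, wSigma ω₁ ω₂ (b - X (m - 1) k + η) with hQ1
  set Q2 := ∏ k, wSigma ω₁ ω₂ (b - X m k - η) with hQ2
  set Q3 := ∏ k, wSigma ω₁ ω₂ (b - X (m + 1) k) with hQ3
  have hm1 : (m - 1) + 1 = m := by ring
  -- nonvanishing of the denominators
  have hQ1ne : Q1 ≠ 0 := by
    refine Finset.prod_ne_zero_iff.mpr fun k _ => ?_
    have := hcrm (m - 1) k j
    rw [hm1] at this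
    have h2 := wSigma_neg_ne_zero this
    have : -(X (m - 1) k - X m j - η) = b - X (m - 1) k + η := by rw [hb]; ring
    rwa [this] at h2
  have hQ2ne : Q2 ≠ 0 := Finset.prod_ne_zero_iff.mpr fun k _ => hgenm m j k
  have hQ3ne : Q3 ≠ 0 := Finset.prod_ne_zero_iff.mpr fun k _ => hcr0 m j k
  -- the diagonal-vanishing product
  have hdiag : (∏ k, wSigma ω₁ ω₂ (b - X m k)) = 0 :=
    Finset.prod_eq_zero (Finset.mem_univ j) (by rw [hb, sub_self, wSigma_zero])
  -- equation (A): from hfe m at x = b - η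
  have eA : P3 * ρ m b = lam * Q3 * ρ m (b - η) := by
    have h := hfe m (b - η)
    rw [sub_add_cancel] at h
    have r1 : (∏ k, wSigma ω₁ ω₂ (b - η - X (m + 1) k)) = P3 :=
      Finset.prod_congr rfl fun k _ => by rw [sub_right_comm]
    rw [r1, hdiag, zero_mul, sub_eq_zero] at h
    exact h
  -- equation (B): from hfe (m-1) at x = b
  have eB : Q1 * ρ m b = -(lam * P2 * ρ (m - 1) b) := by
    have h := hfe (m - 1) b
    rw [hm1] at h
    have r1 : (∏ k, wSigma ω₁ ω₂ (b + η - X m k)) = P2 :=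
      Finset.prod_congr rfl fun k _ => by rw [sub_add_eq_add_sub]
    have r2 : (∏ k, wSigma ω₁ ω₂ (b + η - X (m - 1) k)) = Q1 :=
      Finset.prod_congr rfl fun k _ => by rw [sub_add_eq_add_sub]
    rw [hdiag, zero_mul, r1, r2, zero_sub] at h
    exact h.symm
  -- equation (C): from hfe (m-1) at x = b - η
  have eC : P1 * ρ m (b - η) = Q2 * ρ (m - 1) b := by
    have h := hfe (m - 1) (b - η)
    rw [hm1, sub_add_cancel] at h
    have r1 : (∏ k, wSigma ω₁ ω₂ (b - η - X m k)) = Q2 :=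
      Finset.prod_congr rfl fun k _ => by rw [sub_right_comm]
    have r2 : (∏ k, wSigma ω₁ ω₂ (b - X (m - 1) k)) = P1 := rfl
    rw [r1, hdiag, mul_zero, zero_mul, sub_zero, r2] at h
    exact h.symm
  -- combine
  have key : P1 * P2 * P3 = -(Q1 * Q2 * Q3) := by
    have hlr : lam * ρ (m - 1) b ≠ 0 := mul_ne_zero hlam (hρ0 (m - 1) m j)
    apply mul_right_cancel₀ hlr
    linear_combination (-(P1 * Q1)) * eA + (P1 * P3) * eB + (-(lam * Q1 * Q3)) * eC
  -- finish
  rw [Finset.prod_div_distrib]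
  simp only [Finset.prod_mul_distrib]
  rw [← hP1, ← hP2, ← hP3, ← hQ1, ← hQ2, ← hQ3, div_eq_iff
    (mul_ne_zero (mul_ne_zero hQ1ne hQ2ne) hQ3ne), key]
  ring
end

section
/- (Discrete zero curvature from Hirota's equation) Let τ : ℤ³ → ℂ∖{0} satisfy the Hirota bilinear equation λ₂₃·τ(l₁+1,l₂,l₃)τ(l₁,l₂+1,l₃+1) − λ₁₃·τ(l₁,l₂+1,l₃)τ(l₁+1,l₂,l₃+1) + λ₁₂·τ(l₁,l₂,l₃+1)τ(l₁+1,l₂+1,l₃) = 0 with λ's nonzero. For α = 2,3 define operators on functions ψ : ℤ³ → ℂ by (M̂^{(α)}ψ)(l) = ψ(l₁+1, l_α−1) − λ_{1α}·[τ(l₁,l_α−1)τ(l₁+1,l_α)/(τ(l₁,l_α)τ(l₁+1,l_α−1))]·ψ(l₁, l_α−1) (shifting only the indicated arguments). Then M̂^{(2)} and M̂^{(3)} commute: M̂^{(2)}M̂^{(3)}ψ = M̂^{(3)}M̂^{(2)}ψ for all ψ and all l ∈ ℤ³. -/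
open Complex

/-- The operator M̂^{(2)} = e^{−∂_{l₂}}M^{(2)} of the auxiliary linear problem,
shifting l₁ and l₂ only. -/
noncomputable def Mhat2 (lam12 : ℂ) (τ ψ : ℤ → ℤ → ℤ → ℂ) (l₁ l₂ l₃ : ℤ) : ℂ :=
  ψ (l₁ + 1) (l₂ - 1) l₃ -
    lam12 * (τ l₁ (l₂ - 1) l₃ * τ (l₁ + 1) l₂ l₃) /
      (τ l₁ l₂ l₃ * τ (l₁ + 1) (l₂ - 1) l₃) * ψ l₁ (l₂ - 1) l₃

/-- The operator M̂^{(3)} = e^{−∂_{l₃}}M^{(3)} of the auxiliary linear problem,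
shifting l₁ and l₃ only. -/
noncomputable def Mhat3 (lam13 : ℂ) (τ ψ : ℤ → ℤ → ℤ → ℂ) (l₁ l₂ l₃ : ℤ) : ℂ :=
  ψ (l₁ + 1) l₂ (l₃ - 1) -
    lam13 * (τ l₁ l₂ (l₃ - 1) * τ (l₁ + 1) l₂ l₃) /
      (τ l₁ l₂ l₃ * τ (l₁ + 1) l₂ (l₃ - 1)) * ψ l₁ l₂ (l₃ - 1)

/-- discrete zero curvature from Hirota's equation: if a nowhere
vanishing τ satisfies the Hirota bilinear equation, then the operators M̂^{(2)}
and M̂^{(3)} commute. -/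
theorem discrete_zero_curvature (lam12 lam13 lam23 : ℂ)
    (h12 : lam12 ≠ 0) (h13 : lam13 ≠ 0) (h23 : lam23 ≠ 0)
    (τ : ℤ → ℤ → ℤ → ℂ) (hτ : ∀ l₁ l₂ l₃, τ l₁ l₂ l₃ ≠ 0)
    (hHirota : ∀ l₁ l₂ l₃ : ℤ,
      lam23 * (τ (l₁ + 1) l₂ l₃ * τ l₁ (l₂ + 1) (l₃ + 1)) -
        lam13 * (τ l₁ (l₂ + 1) l₃ * τ (l₁ + 1) l₂ (l₃ + 1)) +
        lam12 * (τ l₁ l₂ (l₃ + 1) * τ (l₁ + 1) (l₂ + 1) l₃) = 0) :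
    ∀ (ψ : ℤ → ℤ → ℤ → ℂ) (l₁ l₂ l₃ : ℤ),
      Mhat2 lam12 τ (Mhat3 lam13 τ ψ) l₁ l₂ l₃ =
        Mhat3 lam13 τ (Mhat2 lam12 τ ψ) l₁ l₂ l₃ := by
  intro ψ l₁ l₂ l₃
  have Hp := hHirota l₁ (l₂ - 1) (l₃ - 1)
  have Hq := hHirota (l₁ + 1) (l₂ - 1) (l₃ - 1)
  simp only [show l₂ - 1 + 1 = l₂ from by ring, show l₃ - 1 + 1 = l₃ from by ring,
    show l₁ + 1 + 1 = l₁ + 2 from by ring] at Hp Hq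
  have key :
      lam13 * (τ (l₁+1) (l₂-1) (l₃-1) * τ (l₁+1+1) (l₂-1) l₃) /
        (τ (l₁+1) (l₂-1) l₃ * τ (l₁+1+1) (l₂-1) (l₃-1))
      + lam12 * (τ l₁ (l₂-1) l₃ * τ (l₁+1) l₂ l₃) /
        (τ l₁ l₂ l₃ * τ (l₁+1) (l₂-1) l₃)
      = lam12 * (τ (l₁+1) (l₂-1) (l₃-1) * τ (l₁+1+1) l₂ (l₃-1)) /
        (τ (l₁+1) l₂ (l₃-1) * τ (l₁+1+1) (l₂-1) (l₃-1))
      + lam13 * (τ l₁ l₂ (l₃-1) * τ (l₁+1) l₂ l₃) /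
        (τ l₁ l₂ l₃ * τ (l₁+1) l₂ (l₃-1)) := by
    have e : l₁ + 1 + 1 = l₁ + 2 := by ring
    rw [e, div_add_div _ _ (mul_ne_zero (hτ _ _ _) (hτ _ _ _)) (mul_ne_zero (hτ _ _ _) (hτ _ _ _)),
      div_add_div _ _ (mul_ne_zero (hτ _ _ _) (hτ _ _ _)) (mul_ne_zero (hτ _ _ _) (hτ _ _ _)),
      div_eq_div_iff (mul_ne_zero (mul_ne_zero (hτ _ _ _) (hτ _ _ _)) (mul_ne_zero (hτ _ _ _) (hτ _ _ _)))
        (mul_ne_zero (mul_ne_zero (hτ _ _ _) (hτ _ _ _)) (mul_ne_zero (hτ _ _ _) (hτ _ _ _)))]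
    linear_combination (τ (l₁+1) l₂ l₃ * τ (l₁+2) (l₂-1) (l₃-1) *
        (τ (l₁+1) (l₂-1) l₃ * τ (l₁+1) l₂ (l₃-1) * τ (l₁+2) (l₂-1) (l₃-1) * τ l₁ l₂ l₃)) * Hp -
      (τ (l₁+1) (l₂-1) (l₃-1) * τ l₁ l₂ l₃ *
        (τ (l₁+1) (l₂-1) l₃ * τ (l₁+1) l₂ (l₃-1) * τ (l₁+2) (l₂-1) (l₃-1) * τ l₁ l₂ l₃)) * Hq
  have prod :
      (lam12 * (τ l₁ (l₂-1) l₃ * τ (l₁+1) l₂ l₃) / (τ l₁ l₂ l₃ * τ (l₁+1) (l₂-1) l₃)) *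
      (lam13 * (τ l₁ (l₂-1) (l₃-1) * τ (l₁+1) (l₂-1) l₃) /
        (τ l₁ (l₂-1) l₃ * τ (l₁+1) (l₂-1) (l₃-1)))
      = (lam13 * (τ l₁ l₂ (l₃-1) * τ (l₁+1) l₂ l₃) / (τ l₁ l₂ l₃ * τ (l₁+1) l₂ (l₃-1))) *
      (lam12 * (τ l₁ (l₂-1) (l₃-1) * τ (l₁+1) l₂ (l₃-1)) /
        (τ l₁ l₂ (l₃-1) * τ (l₁+1) (l₂-1) (l₃-1))) := by
    rw [div_mul_div_comm, div_mul_div_comm,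
      div_eq_div_iff
        (mul_ne_zero (mul_ne_zero (hτ _ _ _) (hτ _ _ _)) (mul_ne_zero (hτ _ _ _) (hτ _ _ _)))
        (mul_ne_zero (mul_ne_zero (hτ _ _ _) (hτ _ _ _)) (mul_ne_zero (hτ _ _ _) (hτ _ _ _)))]
    ring
  simp only [Mhat2, Mhat3]
  linear_combination ψ l₁ (l₂-1) (l₃-1) * prod - ψ (l₁+1) (l₂-1) (l₃-1) * key
end
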